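/- Let X and Y be locally connected spaces, f : X → Y continuous, and I ⊆ X a negligible subset. If the restriction of f to X − I is diffuse, then f is diffuse. -/
import Mathlib


open Set Topology

/-- An open subset `U` is Z-dense if it meets every non-empty open connected set
in a non-empty connected set. -/
def IsZDense {X : Type*} [TopologicalSpace X] (U : Set X) : Prop :=
  IsOpen U ∧ ∀ C : Set X, IsOpen C → IsConnected C → IsConnected (U ∩ C)

/-- A subset is negligible if its complement is Z-dense. -/
def IsNegligible {X : Type*} [TopologicalSpace X] (I : Set X) : Prop :=
  IsZDense Iᶜ

/-- A negligible subset element `(U, I)`: `U` open, `I ⊆ U`, the subspace `U`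
locally connected, and `I` negligible in the subspace `U`. -/
def NegligibleElem {Y : Type*} [TopologicalSpace Y] (U I : Set Y) : Prop :=
  IsOpen U ∧ I ⊆ U ∧ LocallyConnectedSpace ↥U ∧
    IsNegligible ((Subtype.val ⁻¹' I : Set ↥U))

/-- A continuous function is diffuse if it pulls back negligible subset elements
to negligible subset elements. -/
def Diffuse {X Y : Type*} [TopologicalSpace X] [TopologicalSpace Y] (f : X → Y) : Prop :=
  Continuous f ∧ ∀ U I : Set Y, NegligibleElem U I → NegligibleElem (f ⁻¹' U) (f ⁻¹' I)


lemma isConnected_image_val_iff' {X : Type*} [TopologicalSpace X] {U : Set X} {s : Set ↥U} :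
    IsConnected (Subtype.val '' s) ↔ IsConnected s := by
  unfold IsConnected
  rw [IsInducing.subtypeVal.isPreconnected_image, Set.image_nonempty]

lemma negligible_subtype_iff' {X : Type*} [TopologicalSpace X] {U I : Set X}
    (hU : IsOpen U) (hIU : I ⊆ U) :
    IsNegligible ((Subtype.val ⁻¹' I : Set ↥U)) ↔
      IsOpen (U \ I) ∧
        ∀ C : Set X, C ⊆ U → IsOpen C → IsConnected C → IsConnected (C \ I) := by
  have hval : IsOpenEmbedding (Subtype.val : ↥U → X) := hU.isOpenEmbedding_subtypeVal
  have hcompl : ((Subtype.val ⁻¹' I : Set ↥U))ᶜ = Subtype.val ⁻¹' (U \ I) := by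
    ext x
    simp [x.2]
  constructor
  · rintro ⟨hopen, hconn⟩
    constructor
    · have := hval.isOpenMap _ hopen
      rwa [hcompl, Subtype.image_preimage_coe, inter_eq_self_of_subset_right diff_subset] at this
    · intro C hCU hCopen hCconn
      have hC' : IsConnected (Subtype.val ⁻¹' C : Set ↥U) := by
        rw [← isConnected_image_val_iff', Subtype.image_preimage_coe,
          inter_eq_self_of_subset_right hCU]
        exact hCconn
      have := hconn _ (hCopen.preimage continuous_subtype_val) hC'
      rw [← isConnected_image_val_iff'] at this
      rwa [hcompl, ← Set.preimage_inter, Subtype.image_preimage_coe,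
        inter_eq_self_of_subset_right (fun x hx => hCU hx.2),
        show (U \ I) ∩ C = C \ I from by
          ext x
          exact ⟨fun h => ⟨h.2, h.1.2⟩, fun h => ⟨⟨hCU h.1, h.2⟩, h.1⟩⟩] at this
  · rintro ⟨hopen, hconn⟩
    constructor
    · rw [hcompl]
      exact hopen.preimage continuous_subtype_val
    · intro C' hC'open hC'conn
      have hCU : Subtype.val '' C' ⊆ U := by
        rintro x ⟨y, -, rfl⟩; exact y.2
      have := hconn _ hCU (hval.isOpenMap _ hC'open)
        (isConnected_image_val_iff'.mpr hC'conn)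
      rw [← isConnected_image_val_iff']
      have himg : Subtype.val '' (((Subtype.val ⁻¹' I : Set ↥U))ᶜ ∩ C')
          = Subtype.val '' C' \ I := by
        rw [hcompl, Set.image_inter Subtype.val_injective, Subtype.image_preimage_coe,
          inter_eq_self_of_subset_right diff_subset]
        ext x
        constructor
        · rintro ⟨hx1, hx2⟩; exact ⟨hx2, hx1.2⟩
        · rintro ⟨hx1, hx2⟩; exact ⟨⟨hCU hx1, hx2⟩, hx1⟩
      rw [himg]
      exact this

/-- If `f` is continuous, `I` is negligible in `X` and the restriction of `f`
to `X − I` is diffuse, then `f` is diffuse. -/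
theorem diffuse_of_diffuse_restrict_compl_negligible {X Y : Type*}
    [TopologicalSpace X] [LocallyConnectedSpace X]
    [TopologicalSpace Y] [LocallyConnectedSpace Y]
    (f : X → Y) (hf : Continuous f) {I : Set X} (hI : IsNegligible I)
    (hres : Diffuse (fun x : ↥(Iᶜ) => f ↑x)) :
    Diffuse f := by
  constructor
  · exact hf
  intro U J hUJ
  obtain ⟨hUopen, hJU, hULC, hJneg⟩ := hUJ
  obtain ⟨hUJopen, hUJconn⟩ := (negligible_subtype_iff' hUopen hJU).mp hJneg
  have hVopen : IsOpen (f ⁻¹' U) := hUopen.preimage hf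
  have hJVsub : f ⁻¹' J ⊆ f ⁻¹' U := fun x hx => hJU hx
  have := hVopen.locallyConnectedSpace
  refine ⟨hVopen, hJVsub, this, ?_⟩
  rw [negligible_subtype_iff' hVopen hJVsub]
  have hUJo : IsOpen (f ⁻¹' U \ f ⁻¹' J) := by
    rw [← Set.preimage_diff]
    exact hUJopen.preimage hf
  refine ⟨hUJo, ?_⟩
  intro C hCV hCopen hCconn
  -- `Iᶜ` is dense
  have hdense : Dense Iᶜ := by
    intro x
    rw [mem_closure_iff]
    intro O hO hxO
    have hD : IsConnected (connectedComponentIn O x) :=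
      isConnected_connectedComponentIn_iff.mpr hxO
    obtain ⟨y, hy⟩ := (hI.2 _ (hO.connectedComponentIn) hD).nonempty
    exact ⟨y, connectedComponentIn_subset O x hy.2, hy.1⟩
  -- apply diffuseness of the restriction
  obtain ⟨-, hres2⟩ := hres
  obtain ⟨hVo', hsub', -, hneg'⟩ := hres2 U J ⟨hUopen, hJU, hULC, hJneg⟩
  obtain ⟨-, key⟩ := (negligible_subtype_iff' hVo' hsub').mp hneg'
  -- the trace of `C` on `Iᶜ`
  have hC'sub : (Subtype.val ⁻¹' C : Set ↥(Iᶜ)) ⊆ (fun x : ↥(Iᶜ) => f ↑x) ⁻¹' U :=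
    fun x hx => hCV hx
  have hC'open : IsOpen (Subtype.val ⁻¹' C : Set ↥(Iᶜ)) :=
    hCopen.preimage continuous_subtype_val
  have hC'conn : IsConnected (Subtype.val ⁻¹' C : Set ↥(Iᶜ)) := by
    rw [← isConnected_image_val_iff', Subtype.image_preimage_coe]
    exact hI.2 C hCopen hCconn
  have hconn2 := key _ hC'sub hC'open hC'conn
  have hS : IsConnected ((Iᶜ ∩ C) \ f ⁻¹' J) := by
    rw [← isConnected_image_val_iff'] at hconn2
    have heq : (Subtype.val '' ((Subtype.val ⁻¹' C : Set ↥(Iᶜ)) \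
        (fun x : ↥(Iᶜ) => f ↑x) ⁻¹' J)) = (Iᶜ ∩ C) \ f ⁻¹' J := by
      have : ((Subtype.val ⁻¹' C : Set ↥(Iᶜ)) \ (fun x : ↥(Iᶜ) => f ↑x) ⁻¹' J)
          = (Subtype.val ⁻¹' (C \ f ⁻¹' J) : Set ↥(Iᶜ)) := rfl
      rw [this, Subtype.image_preimage_coe, Set.inter_diff_assoc]
    rwa [heq] at hconn2
  refine hS.subset_closure (fun x hx => ⟨hx.1.2, hx.2⟩) ?_
  intro x hx
  have hO'open : IsOpen (C ∩ f ⁻¹' (U \ J)) := hCopen.inter (hUJopen.preimage hf)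
  have hxO' : x ∈ C ∩ f ⁻¹' (U \ J) := ⟨hx.1, hCV hx.1, hx.2⟩
  have hx2 : x ∈ closure ((C ∩ f ⁻¹' (U \ J)) ∩ Iᶜ) :=
    hO'open.inter_closure ⟨hxO', hdense x⟩
  refine closure_mono ?_ hx2
  rintro y ⟨⟨hyC, -, hyJ⟩, hyI⟩
  exact ⟨⟨hyI, hyC⟩, hyJ⟩
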